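/- arXiv:2503.05364 — 2 statements merged into one kernel-verified Lean document; each statement's English description precedes it below -/
import Mathlib

section
/- The law of excluded middle φ ∨ φ⊥ is derivable in NK± for any formula φ. -/
/-- Literals: assertions `pos c` and denials `neg c` of contents `c`. -/
inductive Lit (C : Type) : Type
  | pos : C → Lit C
  | neg : C → Lit C

/-- Dual literal: swaps assertion and denial. -/
def Lit.dual {C : Type} : Lit C → Lit C
  | .pos c => .neg c
  | .neg c => .pos c

/-- Formulas over literals. -/
inductive Form (C : Type) : Type
  | lit : Lit C → Form C
  | bot : Form C
  | top : Form C
  | and : Form C → Form C → Form C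
  | or  : Form C → Form C → Form C
  | imp : Form C → Form C → Form C

/-- The de Morgan dual operator on formulas. -/
def Form.dual {C : Type} : Form C → Form C
  | .lit l => .lit l.dual
  | .bot => .top
  | .top => .bot
  | .and φ ψ => .or φ.dual ψ.dual
  | .or φ ψ => .and φ.dual ψ.dual
  | .imp φ ψ => .and φ ψ.dual

/-- A valuation: maps literals to {0,1} with `v (neg c) = 1 - v (pos c)`. -/
structure Val (C : Type) where
  v : Lit C → ℕ
  le_one : ∀ l, v l ≤ 1
  dual_neg : ∀ c : C, v (Lit.neg c) = 1 - v (Lit.pos c)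

/-- Truth-functional extension of a valuation to formulas. -/
def Val.eval {C : Type} (v : Val C) : Form C → ℕ
  | .lit l => v.v l
  | .bot => 0
  | .top => 1
  | .and φ ψ => min (v.eval φ) (v.eval ψ)
  | .or φ ψ => max (v.eval φ) (v.eval ψ)
  | .imp φ ψ => max (1 - v.eval φ) (v.eval ψ)

/-- Classical consequence. -/
def Entails {C : Type} (Γ : Set (Form C)) (φ : Form C) : Prop :=
  ∀ v : Val C, (∀ γ ∈ Γ, v.eval γ = 1) → v.eval φ = 1

/-- The natural deduction system NK±: intuitionistic rules plus DM and EXC. -/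
inductive NK {C : Type} : Set (Form C) → Form C → Prop
  | hyp {Γ} {φ : Form C} : φ ∈ Γ → NK Γ φ
  | topI {Γ} : NK Γ .top
  | botE {Γ} {φ : Form C} : NK Γ .bot → NK Γ φ
  | impI {Γ} {φ ψ : Form C} : NK (insert φ Γ) ψ → NK Γ (.imp φ ψ)
  | impE {Γ} {φ ψ : Form C} : NK Γ (.imp φ ψ) → NK Γ φ → NK Γ ψ
  | andI {Γ} {φ ψ : Form C} : NK Γ φ → NK Γ ψ → NK Γ (.and φ ψ)
  | andE1 {Γ} {φ ψ : Form C} : NK Γ (.and φ ψ) → NK Γ φ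
  | andE2 {Γ} {φ ψ : Form C} : NK Γ (.and φ ψ) → NK Γ ψ
  | orI1 {Γ} {φ ψ : Form C} : NK Γ φ → NK Γ (.or φ ψ)
  | orI2 {Γ} {φ ψ : Form C} : NK Γ ψ → NK Γ (.or φ ψ)
  | orE {Γ} {φ ψ χ : Form C} :
      NK Γ (.or φ ψ) → NK (insert φ Γ) χ → NK (insert ψ Γ) χ → NK Γ χ
  | dm {Γ} {φ : Form C} : NK (insert φ Γ) .bot → NK Γ φ.dual
  | exc {Γ} {φ : Form C} : NK Γ φ → NK Γ φ.dual → NK Γ .bot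

/-- An atomic rule `(L₁⇒l₁),…,(Lₙ⇒lₙ) ⇒ l` (the case of an empty premiss list,
together with `APP₁`/`APP₂`, covers both forms of atomic rule). -/
structure AtomicRule (C : Type) where
  prems : List (Set (Lit C) × Lit C)
  concl : Lit C

/-- A base is a set of atomic rules. -/
abbrev Base (C : Type) := Set (AtomicRule C)

/-- Derivability in a base.  Conclusions are `some l` (a literal) or `none` (⊥).
Closed under REF, APP₁/APP₂, ABS and DM. -/
inductive Deriv {C : Type} (B : Base C) : Set (Lit C) → Option (Lit C) → Prop
  | ref {L} {l : Lit C} : l ∈ L → Deriv B L (some l)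
  | app {L} (r : AtomicRule C) : r ∈ B →
      (∀ p ∈ r.prems, Deriv B (p.1 ∪ L) (some p.2)) → Deriv B L (some r.concl)
  | abs {L} {l : Lit C} : Deriv B L (some l) → Deriv B L (some l.dual) →
      Deriv B L none
  | dm {L} {l : Lit C} : Deriv B (insert l L) none → Deriv B L (some l.dual)

/-- Support in a base (empty context). -/
def Supp {C : Type} (B : Base C) : Form C → Prop
  | .lit l => Deriv B ∅ (some l)
  | .bot => ∀ l : Lit C, Deriv B ∅ (some l)
  | .top => True
  | .and φ ψ => Supp B φ ∧ Supp B ψ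
  | .or φ ψ => ∀ X : Base C, B ⊆ X → ∀ l : Lit C,
      (∀ Y : Base C, X ⊆ Y → Supp Y φ → Deriv Y ∅ (some l)) →
      (∀ Y : Base C, X ⊆ Y → Supp Y ψ → Deriv Y ∅ (some l)) →
      Deriv X ∅ (some l)
  | .imp φ ψ => ∀ X : Base C, B ⊆ X → Supp X φ → Supp X ψ

/-- Support with a context: `Γ ⊩_B φ`. -/
def SuppCtx {C : Type} (B : Base C) (Γ : Set (Form C)) (φ : Form C) : Prop :=
  ∀ X : Base C, B ⊆ X → (∀ γ ∈ Γ, Supp X γ) → Supp X φ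

/-- Validity: support in every base. -/
def Valid {C : Type} (Γ : Set (Form C)) (φ : Form C) : Prop :=
  ∀ B : Base C, SuppCtx B Γ φ

lemma NK.mono {C : Type} {Γ Δ : Set (Form C)} {φ : Form C}
    (h : NK Γ φ) (hs : Γ ⊆ Δ) : NK Δ φ := by
  induction h generalizing Δ with
  | hyp h => exact NK.hyp (hs h)
  | topI => exact NK.topI
  | botE _ ih => exact NK.botE (ih hs)
  | impI _ ih => exact NK.impI (ih (Set.insert_subset_insert hs))
  | impE _ _ ih1 ih2 => exact NK.impE (ih1 hs) (ih2 hs)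
  | andI _ _ ih1 ih2 => exact NK.andI (ih1 hs) (ih2 hs)
  | andE1 _ ih => exact NK.andE1 (ih hs)
  | andE2 _ ih => exact NK.andE2 (ih hs)
  | orI1 _ ih => exact NK.orI1 (ih hs)
  | orI2 _ ih => exact NK.orI2 (ih hs)
  | orE _ _ _ ih ih1 ih2 =>
      exact NK.orE (ih hs) (ih1 (Set.insert_subset_insert hs))
        (ih2 (Set.insert_subset_insert hs))
  | dm _ ih => exact NK.dm (ih (Set.insert_subset_insert hs))
  | exc _ _ ih1 ih2 => exact NK.exc (ih1 hs) (ih2 hs)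

lemma NK.dne {C : Type} (φ : Form C) :
    ∀ Γ : Set (Form C), NK Γ φ.dual.dual → NK Γ φ := by
  induction φ with
  | lit l => intro Γ h; cases l <;> exact h
  | bot => intro Γ h; exact h
  | top => intro Γ _; exact NK.topI
  | and a b iha ihb =>
      intro Γ h
      exact NK.andI (iha Γ (NK.andE1 h)) (ihb Γ (NK.andE2 h))
  | or a b iha ihb =>
      intro Γ h
      exact NK.orE h
        (NK.orI1 (iha _ (NK.hyp (Set.mem_insert _ _))))
        (NK.orI2 (ihb _ (NK.hyp (Set.mem_insert _ _))))
  | imp a b iha ihb =>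
      intro Γ h
      apply NK.impI
      apply NK.orE (NK.mono h (Set.subset_insert _ _))
      · exact NK.botE (NK.exc (NK.hyp (Set.mem_insert_of_mem _ (Set.mem_insert _ _)))
          (NK.hyp (Set.mem_insert _ _)))
      · exact ihb _ (NK.hyp (Set.mem_insert _ _))

/-- excluded middle `φ ∨ φ⊥` is derivable in NK±. -/
theorem NK_lem {C : Type} (φ : Form C) : NK ∅ (Form.or φ φ.dual) := by
  have hmem : (Form.and φ.dual φ) ∈ insert (Form.and φ.dual φ) (∅ : Set (Form C)) :=
    Set.mem_insert _ _
  have hbot : NK (insert (Form.and φ.dual φ) ∅) Form.bot :=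
    NK.exc (NK.andE2 (NK.hyp hmem)) (NK.andE1 (NK.hyp hmem))
  have h : NK (∅ : Set (Form C)) (Form.or φ.dual.dual φ.dual) := NK.dm hbot
  exact NK.orE h
    (NK.orI1 (NK.dne φ _ (NK.hyp (Set.mem_insert _ _))))
    (NK.orI2 (NK.hyp (Set.mem_insert _ _)))
end

section
/- EXC is semantically admissible for support: for any base B and formula φ, if ⊩_B φ and ⊩_B φ⊥, then ⊩_B ⊥. -/
theorem Lit.dual_dual {C : Type} (l : Lit C) : l.dual.dual = l := by
  cases l <;> rfl

theorem deriv_mono_ctx {C : Type} {B : Base C} {L L' : Set (Lit C)}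
    {o : Option (Lit C)} (h : Deriv B L o) (hLL : L ⊆ L') : Deriv B L' o := by
  induction h generalizing L' with
  | ref hl => exact Deriv.ref (hLL hl)
  | app r hr hp ih =>
      exact Deriv.app r hr (fun p hpmem =>
        ih p hpmem (Set.union_subset_union_right _ hLL))
  | abs h1 h2 ih1 ih2 => exact Deriv.abs (ih1 hLL) (ih2 hLL)
  | dm h ih => exact Deriv.dm (ih (Set.insert_subset_insert hLL))

theorem deriv_mono_base {C : Type} {B B' : Base C} {L : Set (Lit C)}
    {o : Option (Lit C)} (h : Deriv B L o) (hBB : B ⊆ B') : Deriv B' L o := by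
  induction h with
  | ref hl => exact Deriv.ref hl
  | app r hr hp ih => exact Deriv.app r (hBB hr) (fun p hpmem => ih p hpmem)
  | abs h1 h2 ih1 ih2 => exact Deriv.abs ih1 ih2
  | dm h ih => exact Deriv.dm ih

theorem supp_mono {C : Type} {B B' : Base C} (hBB : B ⊆ B') :
    ∀ {φ : Form C}, Supp B φ → Supp B' φ := by
  intro φ
  induction φ with
  | lit l => exact fun h => deriv_mono_base h hBB
  | bot => exact fun h l => deriv_mono_base (h l) hBB
  | top => exact fun h => h
  | and φ ψ ihφ ihψ => exact fun h => ⟨ihφ h.1, ihψ h.2⟩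
  | or φ ψ ihφ ihψ =>
      exact fun h X hX l hφ hψ => h X (hBB.trans hX) l hφ hψ
  | imp φ ψ ihφ ihψ =>
      exact fun h X hX hφ => h X (hBB.trans hX) hφ

theorem deriv_lit_exc {C : Type} {B : Base C} {l : Lit C}
    (h1 : Deriv B ∅ (some l)) (h2 : Deriv B ∅ (some l.dual)) :
    ∀ m : Lit C, Deriv B ∅ (some m) := by
  intro m
  have hb : Deriv B {m.dual} none :=
    Deriv.abs (deriv_mono_ctx h1 (Set.empty_subset _))
      (deriv_mono_ctx h2 (Set.empty_subset _))
  have := Deriv.dm (L := ∅) (l := m.dual)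
    (by simpa using hb)
  rwa [Lit.dual_dual] at this

/-- EXC is semantically admissible for support. -/
theorem supp_exc {C : Type} (B : Base C) (φ : Form C)
    (h1 : Supp B φ) (h2 : Supp B φ.dual) : Supp B .bot := by
  induction φ generalizing B with
  | lit l => exact deriv_lit_exc h1 h2
  | bot => exact h1
  | top => exact h2
  | and φ ψ ihφ ihψ =>
      intro l
      exact h2 B (subset_refl _) l
        (fun Y hY hφd => ihφ Y (supp_mono hY h1.1) hφd l)
        (fun Y hY hψd => ihψ Y (supp_mono hY h1.2) hψd l)
  | or φ ψ ihφ ihψ =>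
      intro l
      exact h1 B (subset_refl _) l
        (fun Y hY hφ => ihφ Y hφ (supp_mono hY h2.1) l)
        (fun Y hY hψ => ihψ Y hψ (supp_mono hY h2.2) l)
  | imp φ ψ ihφ ihψ =>
      exact ihψ B (h1 B (subset_refl _) h2.1) h2.2
end
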